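/- Let (B, q̂) be a compact orientable Riemannian 2-manifold of genus g, ω̂ a smooth 1-form on B, Φ₁ a smooth complex function on B, and suppose the scalar curvature identity ½R = 2|Φ₁|² + div(ω̂) + |ω̂|²_q̂ holds on B (R = Ricci scalar of q̂). Then, integrating over B and using Gauss–Bonnet, 4π(1−g) = ∫_B (|ω̂|²_q̂ + 2|Φ₁|²) dvol. Consequently g ∈ {0, 1}, and if g = 1 then R ≡ 0, ω̂ ≡ 0 and Φ₁ ≡ 0. -/

import Mathlib

open MeasureTheory

/-- Topological constraint (eq:top-cen): on a compact surface `B` of genus `g` with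
volume measure `μ`, if the scalar curvature identity
`½ R = 2|Φ₁|² + div ω̂ + |ω̂|²` holds pointwise, the divergence integrates to zero
(Stokes) and Gauss–Bonnet gives `∫ R = 8π(1 − g)`, then
`4π(1 − g) = ∫ (|ω̂|² + 2|Φ₁|²)`, hence `g ≤ 1`, and if `g = 1` then `R ≡ 0`,
`ω̂ ≡ 0` and `Φ₁ ≡ 0`. -/
theorem stmt13 {B F : Type*} [TopologicalSpace B] [CompactSpace B]
    [MeasurableSpace B] [BorelSpace B] [NormedAddCommGroup F]
    (μ : Measure B) [IsFiniteMeasure μ] [μ.IsOpenPosMeasure]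
    (g : ℕ) (R divω : B → ℝ) (ω : B → F) (Φ₁ : B → ℂ)
    (hRc : Continuous R) (hωc : Continuous ω) (hΦc : Continuous Φ₁)
    (hdc : Continuous divω)
    (hid : ∀ x, (1/2 : ℝ) * R x = 2 * ‖Φ₁ x‖ ^ 2 + divω x + ‖ω x‖ ^ 2)
    (hstokes : ∫ x, divω x ∂μ = 0)
    (hlink : (∀ x, ω x = 0) → ∀ x, divω x = 0)
    (hGB : ∫ x, R x ∂μ = 8 * Real.pi * (1 - (g : ℝ))) :
    (4 * Real.pi * (1 - (g : ℝ))
        = ∫ x, (‖ω x‖ ^ 2 + 2 * ‖Φ₁ x‖ ^ 2) ∂μ) ∧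
    g ≤ 1 ∧
    (g = 1 → ∀ x, R x = 0 ∧ ω x = 0 ∧ Φ₁ x = 0) := by
  set f : B → ℝ := fun x => ‖ω x‖ ^ 2 + 2 * ‖Φ₁ x‖ ^ 2 with hf
  have hfc : Continuous f := by
    continuity
  have hfnn : ∀ x, 0 ≤ f x := fun x => by positivity
  have hfint : Integrable f μ := hfc.integrable_of_hasCompactSupport
    (HasCompactSupport.of_compactSpace f)
  have hdint : Integrable divω μ := hdc.integrable_of_hasCompactSupport
    (HasCompactSupport.of_compactSpace divω)
  have hid' : ∀ x, (1/2 : ℝ) * R x = divω x + f x := by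
    intro x; rw [hid x, hf]; ring
  have hmain : 4 * Real.pi * (1 - (g : ℝ)) = ∫ x, f x ∂μ := by
    have : ∫ x, (1/2 : ℝ) * R x ∂μ = ∫ x, (divω x + f x) ∂μ := by
      exact integral_congr_ae (Filter.Eventually.of_forall hid')
    rw [integral_add hdint hfint, hstokes, integral_const_mul, hGB] at this
    linarith
  refine ⟨hmain, ?_, ?_⟩
  · by_contra h
    push_neg at h
    have hg : (2 : ℝ) ≤ (g : ℝ) := by exact_mod_cast h
    have hI : 0 ≤ ∫ x, f x ∂μ := integral_nonneg hfnn
    have hπ := Real.pi_pos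
    nlinarith
  · intro hg1
    have hz : ∫ x, f x ∂μ = 0 := by
      rw [← hmain, hg1]; norm_num
    have hfz : ∀ x, f x = 0 := by
      have hae : f =ᵐ[μ] 0 :=
        (integral_eq_zero_iff_of_nonneg hfnn hfint).mp hz
      have := (hfc.ae_eq_iff_eq μ continuous_const).mp hae
      intro x; exact congrFun this x
    have hωz : ∀ x, ω x = 0 := by
      intro x
      have hx := hfz x
      simp only [hf] at hx
      have h1 : ‖ω x‖ ^ 2 = 0 := by nlinarith [sq_nonneg ‖ω x‖, sq_nonneg (‖Φ₁ x‖)]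
      simpa [pow_eq_zero_iff] using h1
    have hΦz : ∀ x, Φ₁ x = 0 := by
      intro x
      have hx := hfz x
      simp only [hf] at hx
      have h1 : ‖Φ₁ x‖ ^ 2 = 0 := by nlinarith [sq_nonneg ‖ω x‖]
      have : ‖Φ₁ x‖ = 0 := by
        simpa [pow_eq_zero_iff] using h1
      simpa using this
    intro x
    refine ⟨?_, hωz x, hΦz x⟩
    have hd := hlink hωz x
    have h1 := hid' x
    have h2 := hfz x
    rw [h2, hd] at h1
    linarith
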